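/- arXiv:2210.03917 — 3 statements merged into one kernel-verified Lean document; each statement's English description precedes it below -/
import Mathlib

section
/- Let g(y) := inf_{z>0} { y²/z + z·log(z) } for y > 0. Then g(y)/y → ∞ as y → ∞. -/
open Filter

lemma mul_log_ge_neg_one {z : ℝ} (hz : 0 < z) : -1 ≤ z * Real.log z := by
  have h := Real.log_le_sub_one_of_pos (show (0:ℝ) < 1/z by positivity)
  have hlog : 1 - 1/z ≤ Real.log z := by
    rw [Real.log_div one_ne_zero (ne_of_gt hz), Real.log_one] at h
    linarith
  have : z * (1 - 1/z) ≤ z * Real.log z := mul_le_mul_of_nonneg_left hlog hz.le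
  have hz' : z * (1 - 1/z) = z - 1 := by field_simp
  nlinarith

theorem g_superlinear
    (g : ℝ → ℝ)
    (hg : ∀ y > (0 : ℝ),
      g y = sInf {v : ℝ | ∃ z > (0 : ℝ), v = y ^ 2 / z + z * Real.log z}) :
    Tendsto (fun y => g y / y) atTop atTop := by
  rw [tendsto_atTop]
  intro b
  set M : ℝ := max b 1 with hM
  have hM1 : (1:ℝ) ≤ M := le_max_right _ _
  have hMb : b ≤ M := le_max_left _ _
  have hMpos : (0:ℝ) < M := lt_of_lt_of_le one_pos hM1
  filter_upwards [eventually_ge_atTop (max 1 (2*M*Real.exp (2*M^2)))] with y hy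
  have hy1 : (1:ℝ) ≤ y := le_trans (le_max_left _ _) hy
  have hy2 : 2*M*Real.exp (2*M^2) ≤ y := le_trans (le_max_right _ _) hy
  have hypos : 0 < y := lt_of_lt_of_le one_pos hy1
  rw [le_div_iff₀ hypos, hg y hypos]
  refine le_csInf ⟨y^2/1 + 1*Real.log 1, 1, one_pos, rfl⟩ ?_
  rintro v ⟨z, hz, rfl⟩
  have key : M * y ≤ y ^ 2 / z + z * Real.log z := by
    by_cases hcase : z ≤ y / (2*M)
    · have h1 : 2*M*y ≤ y^2/z := by
        rw [le_div_iff₀ hz]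
        calc 2*M*y*z ≤ 2*M*y*(y/(2*M)) := by
              apply mul_le_mul_of_nonneg_left hcase; positivity
          _ = y^2 := by field_simp
      have h2 := mul_log_ge_neg_one hz
      nlinarith
    · push_neg at hcase
      have hez : Real.exp (2*M^2) ≤ z := by
        have : Real.exp (2*M^2) ≤ y/(2*M) := by
          rw [le_div_iff₀ (by positivity)]
          linarith [hy2]
        linarith
      have hlog : 2*M^2 ≤ Real.log z := by
        rw [Real.le_log_iff_exp_le hz]; exact hez
      have h2 : z * (2*M^2) ≤ z * Real.log z := mul_le_mul_of_nonneg_left hlog hz.le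
      have h3 : (y/(2*M)) * (2*M^2) ≤ z * (2*M^2) := by
        apply mul_le_mul_of_nonneg_right hcase.le; positivity
      have h4 : (y/(2*M)) * (2*M^2) = M * y := by field_simp
      have h5 : 0 ≤ y^2/z := by positivity
      linarith
  nlinarith
end

section
/- Fix ρ > 0, T > 0, x, y ∈ ℝ. Among continuous, a.e.-differentiable functions δ: [0,T] → ℝ with δ(0) = 0, δ(T) = x, and ∫₀ᵀ δ(t) dt = y, the function δ(t) = c₁ sinh(√ρ t) + c₂ sinh(√ρ(T−t)) + c₃, with c₃ = (√ρ·y − x·tanh(√ρ T/2))/(√ρ T − 2 tanh(√ρ T/2)), c₁ = (x − c₃)/sinh(√ρ T), c₂ = −c₃/sinh(√ρ T), satisfies ρ∫₀ᵀ δ² dt + ∫₀ᵀ (δ')² dt = √ρ·( x²·coth(√ρ T) + (x tanh(√ρ T/2) − √ρ y)²/(√ρ T − 2 tanh(√ρ T/2)) ). -/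
set_option maxHeartbeats 2000000


open Real

lemma tanh_lt_self_of_pos {u : ℝ} (hu : 0 < u) : Real.tanh u < u := by
  rw [Real.tanh_eq_sinh_div_cosh, div_lt_iff₀ (Real.cosh_pos u)]
  have hmono : StrictMonoOn (fun v : ℝ => v * Real.cosh v - Real.sinh v) (Set.Ici 0) := by
    apply strictMonoOn_of_deriv_pos (convex_Ici 0)
    · fun_prop
    · intro v hv
      rw [interior_Ici] at hv
      have hd : HasDerivAt (fun v : ℝ => v * Real.cosh v - Real.sinh v)
          (1 * Real.cosh v + v * Real.sinh v - Real.cosh v) v :=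
        ((hasDerivAt_id v).mul (Real.hasDerivAt_cosh v)).sub (Real.hasDerivAt_sinh v)
      rw [hd.deriv]
      have hv' : 0 < v := hv
      have hs : 0 < Real.sinh v := Real.sinh_pos_iff.2 hv'
      nlinarith [mul_pos hv' hs]
  have h := hmono (Set.self_mem_Ici) (Set.mem_Ici.2 hu.le) hu
  simp only [Real.cosh_zero, Real.sinh_zero, zero_mul, sub_zero, mul_zero, sub_self] at h
  linarith

theorem energy_value_at_EL_solution (ρ T x y : ℝ) (hρ : 0 < ρ) (hT : 0 < T)
    (c₁ c₂ c₃ : ℝ)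
    (hc₃ : c₃ = (Real.sqrt ρ * y - x * tanh (Real.sqrt ρ * T / 2)) /
      (Real.sqrt ρ * T - 2 * tanh (Real.sqrt ρ * T / 2)))
    (hc₁ : c₁ = (x - c₃) / sinh (Real.sqrt ρ * T))
    (hc₂ : c₂ = -c₃ / sinh (Real.sqrt ρ * T))
    (δ δ' : ℝ → ℝ)
    (hδ : δ = fun t => c₁ * sinh (Real.sqrt ρ * t) + c₂ * sinh (Real.sqrt ρ * (T - t)) + c₃)
    (hδ' : δ' = fun t => c₁ * Real.sqrt ρ * cosh (Real.sqrt ρ * t)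
      - c₂ * Real.sqrt ρ * cosh (Real.sqrt ρ * (T - t))) :
    ρ * (∫ t in (0 : ℝ)..T, (δ t) ^ 2) + (∫ t in (0 : ℝ)..T, (δ' t) ^ 2)
      = Real.sqrt ρ * (x ^ 2 * (cosh (Real.sqrt ρ * T) / sinh (Real.sqrt ρ * T))
          + (x * tanh (Real.sqrt ρ * T / 2) - Real.sqrt ρ * y) ^ 2 /
            (Real.sqrt ρ * T - 2 * tanh (Real.sqrt ρ * T / 2))) := by
  set s := Real.sqrt ρ with hs_def
  have hs : 0 < s := Real.sqrt_pos.2 hρ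
  have hsq : s ^ 2 = ρ := Real.sq_sqrt hρ.le
  subst hδ hδ'
  simp only []
  -- the antiderivative
  set G : ℝ → ℝ := fun t => s*c₁^2*Real.sinh (2*(s*t))/2 - s*c₂^2*Real.sinh (2*(s*(T-t)))/2
      + s^2*c₃^2*t - s*c₁*c₂*Real.sinh (s*(2*t-T)) + 2*s*c₁*c₃*Real.cosh (s*t)
      - 2*s*c₂*c₃*Real.cosh (s*(T-t)) with hG_def
  have key : ∀ t ∈ Set.uIcc (0:ℝ) T, HasDerivAt G
      (ρ * (c₁ * sinh (s * t) + c₂ * sinh (s * (T - t)) + c₃) ^ 2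
        + (c₁ * s * cosh (s * t) - c₂ * s * cosh (s * (T - t))) ^ 2) t := by
    intro t _
    have hA : HasDerivAt (fun t : ℝ => s * t) s t := by
      simpa using (hasDerivAt_id t).const_mul s
    have hB : HasDerivAt (fun t : ℝ => s * (T - t)) (-s) t := by
      have := ((hasDerivAt_id t).const_sub T).const_mul s
      simpa using this
    have h2A : HasDerivAt (fun t : ℝ => 2 * (s * t)) (2 * s) t := hA.const_mul 2
    have h2B : HasDerivAt (fun t : ℝ => 2 * (s * (T - t))) (2 * (-s)) t := hB.const_mul 2
    have hC : HasDerivAt (fun t : ℝ => s * (2 * t - T)) (s * 2) t := by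
      have := (((hasDerivAt_id t).const_mul 2).sub_const T).const_mul s
      simpa using this
    have e1 := (h2A.sinh.const_mul (s * c₁ ^ 2)).div_const 2
    have e2 := (h2B.sinh.const_mul (s * c₂ ^ 2)).div_const 2
    have e3 : HasDerivAt (fun t : ℝ => s ^ 2 * c₃ ^ 2 * t) (s ^ 2 * c₃ ^ 2) t := by
      simpa using (hasDerivAt_id t).const_mul (s ^ 2 * c₃ ^ 2)
    have e4 := hC.sinh.const_mul (s * c₁ * c₂)
    have e5 := hA.cosh.const_mul (2 * s * c₁ * c₃)
    have e6 := hB.cosh.const_mul (2 * s * c₂ * c₃)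
    have hG := ((((e1.sub e2).add e3).sub e4).add e5).sub e6
    refine hG.congr_deriv (Eq.symm ?_)
    have hA2 : Real.cosh (2 * (s * t)) = Real.cosh (s*t) ^ 2 + Real.sinh (s*t) ^ 2 :=
      Real.cosh_two_mul _
    have hB2 : Real.cosh (2 * (s * (T - t)))
        = Real.cosh (s*(T-t)) ^ 2 + Real.sinh (s*(T-t)) ^ 2 := Real.cosh_two_mul _
    have hAB : Real.cosh (s * (2 * t - T))
        = Real.cosh (s*t) * Real.cosh (s*(T-t)) - Real.sinh (s*t) * Real.sinh (s*(T-t)) := by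
      rw [show s * (2 * t - T) = s * t - s * (T - t) by ring, Real.cosh_sub]
    rw [hA2, hB2, hAB]
    linear_combination -(c₁ * Real.sinh (s*t) + c₂ * Real.sinh (s*(T-t)) + c₃) ^ 2 * hsq
  have h1 : IntervalIntegrable
      (fun t => (c₁ * sinh (s * t) + c₂ * sinh (s * (T - t)) + c₃) ^ 2)
      MeasureTheory.volume 0 T := by
    apply Continuous.intervalIntegrable; fun_prop
  have h2 : IntervalIntegrable
      (fun t => (c₁ * s * cosh (s * t) - c₂ * s * cosh (s * (T - t))) ^ 2)
      MeasureTheory.volume 0 T := by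
    apply Continuous.intervalIntegrable; fun_prop
  have hcont : Continuous (fun t =>
      ρ * (c₁ * sinh (s * t) + c₂ * sinh (s * (T - t)) + c₃) ^ 2
        + (c₁ * s * cosh (s * t) - c₂ * s * cosh (s * (T - t))) ^ 2) := by fun_prop
  rw [← intervalIntegral.integral_const_mul,
    ← intervalIntegral.integral_add (h1.const_mul ρ) h2,
    intervalIntegral.integral_eq_sub_of_hasDerivAt key (hcont.intervalIntegrable 0 T)]
  -- clean up G T - G 0
  have hGT : G T - G 0 = s*c₁^2*Real.sinh (2*(s*T))/2 + s*c₂^2*Real.sinh (2*(s*T))/2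
      + s^2*c₃^2*T - 2*s*c₁*c₂*Real.sinh (s*T) + 2*s*c₁*c₃*Real.cosh (s*T)
      + 2*s*c₂*c₃*Real.cosh (s*T) - 2*s*c₁*c₃ - 2*s*c₂*c₃ := by
    rw [hG_def]
    have h2T : (2:ℝ) * T - T = T := by ring
    have h0T : (2:ℝ) * 0 - T = -T := by ring
    simp only [sub_self, mul_zero, zero_sub, mul_neg, Real.sinh_neg, Real.sinh_zero,
      Real.cosh_zero, h2T, h0T, sub_zero, mul_one]
    ring
  rw [hGT]
  have hshpos : 0 < Real.sinh (s * T) := Real.sinh_pos_iff.2 (by positivity)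
  have hsh : Real.sinh (s * T) ≠ 0 := ne_of_gt hshpos
  have hth0 : Real.tanh (s * T / 2) * Real.sinh (s * T) = Real.cosh (s * T) - 1 := by
    rw [Real.tanh_eq_sinh_div_cosh, show s * T = 2 * (s * T / 2) by ring,
      Real.sinh_two_mul, Real.cosh_two_mul]
    have hc := (Real.cosh_pos (s * T / 2)).ne'
    field_simp
    linear_combination (-1) * Real.cosh_sq_sub_sinh_sq (s * T / 2)
  have hth : Real.tanh (s * T / 2) = (Real.cosh (s * T) - 1) / Real.sinh (s * T) := by
    rw [eq_div_iff hsh]; exact hth0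
  have hD0 : 0 < s * T - 2 * Real.tanh (s * T / 2) := by
    have := tanh_lt_self_of_pos (u := s * T / 2) (by positivity)
    linarith
  have hDrw : s * T - 2 * Real.tanh (s * T / 2)
      = (s * T * Real.sinh (s * T) - 2 * (Real.cosh (s * T) - 1)) / Real.sinh (s * T) := by
    rw [hth]; field_simp
  have hDp : s * T * Real.sinh (s * T) - 2 * (Real.cosh (s * T) - 1) ≠ 0 := by
    intro h
    apply ne_of_gt hD0
    rw [hDrw, h, zero_div]
  have hc₃' : c₃ = (s * y * Real.sinh (s * T) - x * (Real.cosh (s * T) - 1))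
      / (s * T * Real.sinh (s * T) - 2 * (Real.cosh (s * T) - 1)) := by
    rw [hc₃, hDrw, hth, div_div_eq_mul_div,
      show (s * y - x * ((Real.cosh (s * T) - 1) / Real.sinh (s * T))) * Real.sinh (s * T)
        = s * y * Real.sinh (s * T) - x * (Real.cosh (s * T) - 1) from by field_simp]
  rw [show Real.sinh (2 * (s * T)) = 2 * Real.sinh (s * T) * Real.cosh (s * T)
      from Real.sinh_two_mul (s * T), hc₁, hc₂, hc₃', hDrw, hth]
  have hDp' : s * T * Real.sinh (s * T) - (Real.cosh (s * T) - 1) * 2 ≠ 0 :=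
    fun h => hDp (by linarith)
  field_simp
  ring
end

section
/- Let ρ, T, Λ > 0 and κ ∈ (0, 1/(2ρΛT)). Define A = κ − (1/(2Λ√ρ))·( coth(√ρT) + tanh²(√ρT/2)/(√ρT − 2 tanh(√ρT/2)) ), B = 1/(2ΛT) − √ρ/(2Λ(√ρT − 2 tanh(√ρT/2))), C = tanh(√ρT/2)/(2Λ(√ρT − 2 tanh(√ρT/2))). Then AB − C² = (1/(4√ρΛ) − κ·tanh(√ρT/2)) / (ΛT(√ρT − 2 tanh(√ρT/2))). -/
open Real

lemma sinh_lt_mul_cosh_aux {x : ℝ} (hx : 0 < x) : Real.sinh x < x * Real.cosh x := by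
  have h : StrictMonoOn (fun y => y * Real.cosh y - Real.sinh y) (Set.Ici 0) := by
    apply strictMonoOn_of_deriv_pos (convex_Ici 0)
    · exact ((continuous_id.mul Real.continuous_cosh).sub Real.continuous_sinh).continuousOn
    · intro y hy
      rw [interior_Ici, Set.mem_Ioi] at hy
      have hd : HasDerivAt (fun y => y * Real.cosh y - Real.sinh y)
          (1 * Real.cosh y + y * Real.sinh y - Real.cosh y) y :=
        ((hasDerivAt_id y).mul (Real.hasDerivAt_cosh y)).sub (Real.hasDerivAt_sinh y)
      rw [hd.deriv]
      have hs : 0 < Real.sinh y := by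
        exact Real.sinh_pos_iff.2 hy
      nlinarith
  have := h (Set.self_mem_Ici) (Set.mem_Ici.2 hx.le) hx
  simpa using this

lemma tanh_lt_self_aux {x : ℝ} (hx : 0 < x) : Real.tanh x < x := by
  rw [Real.tanh_eq_sinh_div_cosh, div_lt_iff₀ (Real.cosh_pos x)]
  exact sinh_lt_mul_cosh_aux hx

theorem discriminant_identity (ρ T Λ κ : ℝ) (hρ : 0 < ρ) (hT : 0 < T) (hΛ : 0 < Λ)
    (hκ : κ ∈ Set.Ioo 0 (1 / (2 * ρ * Λ * T)))
    (A B C : ℝ)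
    (hA : A = κ - 1 / (2 * Λ * Real.sqrt ρ) *
      (cosh (Real.sqrt ρ * T) / sinh (Real.sqrt ρ * T)
        + tanh (Real.sqrt ρ * T / 2) ^ 2 /
          (Real.sqrt ρ * T - 2 * tanh (Real.sqrt ρ * T / 2))))
    (hB : B = 1 / (2 * Λ * T) - Real.sqrt ρ /
      (2 * Λ * (Real.sqrt ρ * T - 2 * tanh (Real.sqrt ρ * T / 2))))
    (hC : C = tanh (Real.sqrt ρ * T / 2) /
      (2 * Λ * (Real.sqrt ρ * T - 2 * tanh (Real.sqrt ρ * T / 2)))) :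
    A * B - C ^ 2 = (1 / (4 * Real.sqrt ρ * Λ) - κ * tanh (Real.sqrt ρ * T / 2)) /
      (Λ * T * (Real.sqrt ρ * T - 2 * tanh (Real.sqrt ρ * T / 2))) := by
  have hr : 0 < Real.sqrt ρ := Real.sqrt_pos.2 hρ
  set u := Real.sqrt ρ * T / 2 with hu
  have hu0 : 0 < u := by positivity
  have hsn : 0 < Real.sinh u := by exact Real.sinh_pos_iff.2 hu0
  have hcn : 0 < Real.cosh u := Real.cosh_pos u
  have htl : Real.tanh u < u := tanh_lt_self_aux hu0
  set t := Real.tanh u with ht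
  have ht0 : 0 < t := by rw [ht, Real.tanh_eq_sinh_div_cosh]; positivity
  have h2u : Real.sqrt ρ * T = 2 * u := by rw [hu]; ring
  have hD : 0 < Real.sqrt ρ * T - 2 * t := by rw [h2u]; linarith
  have key : Real.cosh (Real.sqrt ρ * T) / Real.sinh (Real.sqrt ρ * T)
      = (1 + t ^ 2) / (2 * t) := by
    rw [h2u, Real.cosh_two_mul, Real.sinh_two_mul, ht, Real.tanh_eq_sinh_div_cosh]
    have h1 := Real.cosh_sq_sub_sinh_sq u
    field_simp
  subst hA hB hC
  rw [key]
  have hD' : Real.sqrt ρ * T - 2 * t ≠ 0 := ne_of_gt hD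
  field_simp
  ring
end
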